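/- Fix an integer k ≥ 3, n = 2k, z(u) ≡ u (mod k), and (d_k; c_k) as specified. For every γ in the simple fiber F̃(d_k; c_k): if u ∈ {1,…,k}, v ∈ {1,…,2k}, and ε ∈ {1,−1} satisfy v ≡ u + ε (mod k) and γ_{(u+k)v} = 1, then γ_{uw} = 1 for every w ∈ {1,…,2k} with w ≡ u − ε (mod k). -/

import Mathlib

open Finset

/-- The set `P` of 2-element subsets of `{1,…,n}`, encoded as ordered pairs. -/
abbrev Edge (n : ℕ) : Type := {p : Fin n × Fin n // p.1 < p.2}

/-- Entry `γ_{uv}` of a vector `γ ∈ ℤ^P` at the unordered pair `{u,v}` (0 when `u = v`). -/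
def ent {n : ℕ} (γ : Edge n → ℤ) (u v : Fin n) : ℤ :=
  if h : u < v then γ ⟨(u, v), h⟩ else if h : v < u then γ ⟨(v, u), h⟩ else 0

/-- Entry at `{u,v}` of a vector in `ℕ^P`. -/
def entN {n : ℕ} (x : Edge n → ℕ) (u v : Fin n) : ℕ :=
  if h : u < v then x ⟨(u, v), h⟩ else if h : v < u then x ⟨(v, u), h⟩ else 0

/-- Degree sequence: `d(γ)_u = ∑_{v ≠ u} γ_{uv}`. -/
def degSeq {n : ℕ} (γ : Edge n → ℤ) (u : Fin n) : ℤ := ∑ v, ent γ u v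

/-- Color sequence: `c(γ)_{ij} = ∑ γ_{uv}` over `{u,v} ∈ P` with `{z u, z v} = {i,j}`. -/
def colorSeq {n k : ℕ} (z : Fin n → Fin k) (γ : Edge n → ℤ) (i j : Fin k) : ℤ :=
  ∑ e : Edge n,
    if (z e.1.1 = i ∧ z e.1.2 = j) ∨ (z e.1.1 = j ∧ z e.1.2 = i) then γ e else 0

/-- `γ ∈ ker_ℤ DC_{n,z}`: both the degree sequence and the color sequence vanish. -/
def inKer {n k : ℕ} (z : Fin n → Fin k) (γ : Edge n → ℤ) : Prop :=
  (∀ u, degSeq γ u = 0) ∧ ∀ i j, colorSeq z γ i j = 0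

/-- The 1-norm `‖γ‖₁ = ∑_{e ∈ P} |γ_e|`. -/
def norm1 {n : ℕ} (γ : Edge n → ℤ) : ℤ := ∑ e, |γ e|

/-- The set of moves `M_{n,z} = {γ ∈ ker_ℤ DC_{n,z} : ‖γ‖₁ = 4}`. -/
def MSet {n k : ℕ} (z : Fin n → Fin k) : Set (Edge n → ℤ) :=
  {γ | inKer z γ ∧ norm1 γ = 4}

/-- Degree sequence of a vector in `ℕ^P`. -/
def degSeqN {n : ℕ} (x : Edge n → ℕ) (u : Fin n) : ℕ := ∑ v, entN x u v

/-- Color sequence of a vector in `ℕ^P`. -/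
def colorSeqN {n k : ℕ} (z : Fin n → Fin k) (x : Edge n → ℕ) (i j : Fin k) : ℕ :=
  ∑ e : Edge n,
    if (z e.1.1 = i ∧ z e.1.2 = j) ∨ (z e.1.1 = j ∧ z e.1.2 = i) then x e else 0

/-- The fiber `F(b) = {x ∈ ℕ^P : DC_{n,z} x = b}`, where `b = (d; c)`. -/
def Fiber {n k : ℕ} (z : Fin n → Fin k) (d : Fin n → ℤ) (c : Fin k → Fin k → ℤ) :
    Set (Edge n → ℕ) :=
  {x | (∀ u, (degSeqN x u : ℤ) = d u) ∧ ∀ i j, (colorSeqN z x i j : ℤ) = c i j}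

/-- The simple fiber `F̃(b) = F(b) ∩ {0,1}^P`. -/
def SimpleFiber {n k : ℕ} (z : Fin n → Fin k) (d : Fin n → ℤ) (c : Fin k → Fin k → ℤ) :
    Set (Edge n → ℕ) :=
  {x | x ∈ Fiber z d c ∧ ∀ e, x e ≤ 1}

/-- The difference `x − x' ∈ ℤ^P` of two vectors in `ℕ^P`. -/
def diff {n : ℕ} (x x' : Edge n → ℕ) : Edge n → ℤ := fun e => (x e : ℤ) - (x' e : ℤ)

lemma entN_comm {n : ℕ} (x : Edge n → ℕ) (a b : Fin n) : entN x a b = entN x b a := by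
  unfold entN
  rcases lt_trichotomy a b with h | h | h
  · rw [dif_pos h, dif_neg (not_lt.mpr h.le), dif_pos h]
  · subst h; simp
  · rw [dif_neg (not_lt.mpr h.le), dif_pos h, dif_pos h]

lemma entN_self {n : ℕ} (x : Edge n → ℕ) (a : Fin n) : entN x a a = 0 := by
  simp [entN]

lemma entN_le_colorSeqN {n k : ℕ} (z : Fin n → Fin k) (x : Edge n → ℕ) (a b : Fin n)
    (hab : a ≠ b) : entN x a b ≤ colorSeqN z x (z a) (z b) := by
  unfold colorSeqN
  rcases lt_trichotomy a b with h | h | h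
  · have e1 : entN x a b = x ⟨(a,b), h⟩ := by simp [entN, h]
    rw [e1]
    have := Finset.single_le_sum (f := fun e : Edge n =>
      if (z e.1.1 = z a ∧ z e.1.2 = z b) ∨ (z e.1.1 = z b ∧ z e.1.2 = z a) then x e else 0)
      (fun e _ => Nat.zero_le _) (Finset.mem_univ (⟨(a,b), h⟩ : Edge n))
    simpa using this
  · exact absurd h hab
  · have e1 : entN x a b = x ⟨(b,a), h⟩ := by simp [entN, h, not_lt.mpr h.le]
    rw [e1]
    have := Finset.single_le_sum (f := fun e : Edge n =>
      if (z e.1.1 = z a ∧ z e.1.2 = z b) ∨ (z e.1.1 = z b ∧ z e.1.2 = z a) then x e else 0)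
      (fun e _ => Nat.zero_le _) (Finset.mem_univ (⟨(b,a), h⟩ : Edge n))
    simpa using this

lemma mod2 (k a : ℕ) (hk : 0 < k) (ha : a < 2*k) : a % k < k ∧ (a % k = a ∨ a % k + k = a) := by
  refine ⟨Nat.mod_lt _ hk, ?_⟩
  rcases Nat.lt_or_ge a k with h | h
  · exact Or.inl (Nat.mod_eq_of_lt h)
  · right
    have h2 : a % k = (a - k) % k := by
      conv_lhs => rw [show a = (a-k)+k by omega]
      rw [Nat.add_mod_right]
    rw [h2, Nat.mod_eq_of_lt (by omega)]; omega

lemma modeq_nat (k a b : ℕ) (h : Int.ModEq (k:ℤ) a b) : a % k = b % k := by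
  have h2 : ((a % k : ℕ):ℤ) = ((b % k :ℕ):ℤ) := by
    rw [Int.natCast_mod, Int.natCast_mod]; exact h
  exact_mod_cast h2

lemma modeq_down (k a u : ℕ) (hk : 0 < k) (h : Int.ModEq (k:ℤ) (a:ℤ) ((u:ℤ) - 1)) :
    a % k = (u + k - 1) % k := by
  have h1 : ((u + k - 1 : ℕ) : ℤ) = (u:ℤ) - 1 + (k:ℤ)*1 := by omega
  have h2 : Int.ModEq (k:ℤ) (a:ℤ) ((u+k-1:ℕ):ℤ) := by
    rw [h1]
    unfold Int.ModEq at *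
    rw [Int.add_mul_emod_self_left]; exact h
  exact modeq_nat k a _ h2

lemma modeq_up (k a u : ℕ) (h : Int.ModEq (k:ℤ) (a:ℤ) ((u:ℤ) + 1)) :
    a % k = (u + 1) % k := by
  have h2 : Int.ModEq (k:ℤ) (a:ℤ) ((u+1:ℕ):ℤ) := by push_cast; exact h
  exact modeq_nat k a _ h2
lemma colorSeqN_double {n k : ℕ} (z : Fin n → Fin k) (x : Edge n → ℕ) (i j : Fin k)
    (hij : i ≠ j) :
    colorSeqN z x i j = ∑ a, ∑ b, if z a = i ∧ z b = j then entN x a b else 0 := by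
  classical
  set g : Fin n × Fin n → ℕ :=
    fun p => if z p.1 = i ∧ z p.2 = j then entN x p.1 p.2 else 0 with hg
  set F : Fin n × Fin n → ℕ :=
    fun p => if h : p.1 < p.2 then
      (if (z p.1 = i ∧ z p.2 = j) ∨ (z p.1 = j ∧ z p.2 = i) then x ⟨p, h⟩ else 0) else 0
    with hF
  have step1 : colorSeqN z x i j = ∑ p : Fin n × Fin n, F p := by
    unfold colorSeqN
    have e1 : ∀ e : Edge n,
        (if (z e.1.1 = i ∧ z e.1.2 = j) ∨ (z e.1.1 = j ∧ z e.1.2 = i) then x e else 0)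
        = F e.val := by
      rintro ⟨p, hp⟩
      rw [hF]; simp only [dif_pos hp]
    rw [Finset.sum_congr rfl (fun e _ => e1 e)]
    rw [← Finset.sum_subtype (univ.filter fun p : Fin n × Fin n => p.1 < p.2)
      (fun p => by simp) F]
    rw [Finset.sum_filter]
    apply Finset.sum_congr rfl
    intro p _
    by_cases h : p.1 < p.2
    ·  rw [if_pos h]
    ·  rw [if_neg h, hF]; simp [h]
  have step2 : ∑ p : Fin n × Fin n, F p = ∑ p : Fin n × Fin n, g p := by
    have split : ∀ p : Fin n × Fin n, g p =
        (if p.1 < p.2 then g p else 0) + (if p.2 < p.1 then g p else 0) := by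
      rintro ⟨a, b⟩
      rcases lt_trichotomy a b with h | h | h
      · rw [if_pos h, if_neg (by simp [not_lt.mpr h.le]), add_zero]
      · subst h
        have : g (a, a) = 0 := by
          rw [hg]; simp only []
          rw [if_neg]; rintro ⟨h1, h2⟩; exact hij (h1 ▸ h2.symm ▸ rfl)
        simp [this]
      · rw [if_neg (by simp [not_lt.mpr h.le]), if_pos h, zero_add]
    rw [Finset.sum_congr rfl (fun p _ => split p), Finset.sum_add_distrib]
    have swapped : (∑ p : Fin n × Fin n, if p.2 < p.1 then g p else 0)
        = ∑ p : Fin n × Fin n, if p.1 < p.2 then g (p.2, p.1) else 0 := by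
      apply Fintype.sum_equiv (Equiv.prodComm (Fin n) (Fin n))
      rintro ⟨a, b⟩
      simp [Equiv.prodComm]
      rfl
    rw [swapped, ← Finset.sum_add_distrib]
    apply Finset.sum_congr rfl
    rintro ⟨a, b⟩ _
    by_cases h : a < b
    · rw [hF]; simp only [dif_pos h, if_pos h]
      have e1 : entN x a b = x ⟨(a,b), h⟩ := by simp [entN, h]
      have e2 : entN x b a = x ⟨(a,b), h⟩ := by rw [entN_comm]; exact e1
      rw [hg]; simp only []
      by_cases h1 : z a = i ∧ z b = j <;> by_cases h2 : z b = i ∧ z a = j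
      · exact absurd (h1.1.symm.trans h2.2) hij
      · rw [if_pos (Or.inl h1), if_pos h1, if_neg (by tauto), e1, add_zero]
      · rw [if_pos (Or.inr ⟨h2.2, h2.1⟩), if_neg h1, if_pos h2, e2, zero_add]
      · rw [if_neg (by tauto), if_neg h1, if_neg h2, add_zero]
    · rw [hF]; simp only [dif_neg h, if_neg h, add_zero, if_neg h]
  rw [step1, step2, hg, Fintype.sum_prod_type]

set_option maxHeartbeats 1600000 in
lemma aux_main (k : ℕ) (hk : 3 ≤ k) (z : Fin (2*k) → Fin k)
    (hz : ∀ a, (z a).val = a.val % k)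
    (γ : Edge (2*k) → ℕ)
    (hdeg : ∀ a, degSeqN γ a = if a.val < k then 3 else 1)
    (hcol : ∀ i j : Fin k, colorSeqN z γ i j =
      if (i.val + 1) % k = j.val ∨ (j.val + 1) % k = i.val then 2 else 0)
    (hsim : ∀ e, γ e ≤ 1)
    (u v : Fin (2*k)) (hu : u.val < k)
    (j j' : Fin k) (hjj' : j ≠ j')
    (hadj : ∀ c : Fin k, ((u.val+1)%k = c.val ∨ (c.val+1)%k = u.val) ↔ (c = j ∨ c = j'))
    (hvj : v.val % k = j.val)
    (huv : entN γ ⟨u.val+k, by omega⟩ v = 1) :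
    ∀ w : Fin (2*k), w.val % k = j'.val → entN γ u w = 1 := by
  have hk0 : 0 < k := by omega
  set U' : Fin (2*k) := ⟨u.val + k, by omega⟩ with hU'
  have hU'v : U'.val = u.val + k := by rw [hU']
  have hzu : (z u).val = u.val := by rw [hz]; exact Nat.mod_eq_of_lt hu
  -- entries are at most 1
  have hle1 : ∀ a b : Fin (2*k), entN γ a b ≤ 1 := by
    intro a b; unfold entN
    rcases lt_trichotomy a b with h | h | h
    · rw [dif_pos h]; exact hsim _
    · subst h; simp
    · rw [dif_neg (not_lt.mpr h.le), dif_pos h]; exact hsim _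
  -- Step 1: entries at U' other than v vanish
  have hzero1 : ∀ b : Fin (2*k), b ≠ v → entN γ U' b = 0 := by
    intro b hb
    have hsum : ∑ t, entN γ U' t = 1 := by
      have h0 := hdeg U'
      rw [if_neg (by omega)] at h0
      exact h0
    have h1 : entN γ U' v + ∑ t ∈ univ.erase v, entN γ U' t = 1 := by
      rw [Finset.add_sum_erase _ _ (mem_univ v)]; exact hsum
    have h2 : ∑ t ∈ univ.erase v, entN γ U' t = 0 := by omega
    exact (Finset.sum_eq_zero_iff.mp h2) b (by simp [hb])
  -- class membership
  have hmem : ∀ (b : Fin (2*k)) (c : Fin k), z b = c ↔ (b.val = c.val ∨ b.val = c.val + k) := by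
    intro b c
    have h1 := mod2 k b.val hk0 b.isLt
    have hc := c.isLt
    rw [Fin.ext_iff, hz]
    omega
  -- z u differs from j and j'
  have hadjj : (u.val+1)%k = j.val ∨ (j.val+1)%k = u.val := (hadj j).mpr (Or.inl rfl)
  have hadjj' : (u.val+1)%k = j'.val ∨ (j'.val+1)%k = u.val := (hadj j').mpr (Or.inr rfl)
  have hm1 := mod2 k (u.val+1) hk0 (by omega)
  have hmj := mod2 k (j.val+1) hk0 (by omega)
  have hmj' := mod2 k (j'.val+1) hk0 (by omega)
  have hjlt := j.isLt
  have hj'lt := j'.isLt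
  have hzuj : z u ≠ j := by
    intro h
    have h2 : (z u).val = j.val := by rw [h]
    omega
  have hzuj' : z u ≠ j' := by
    intro h
    have h2 : (z u).val = j'.val := by rw [h]
    omega
  -- Step 2: entries from u to classes other than j, j' vanish
  have hclass0 : ∀ b : Fin (2*k), z b ≠ j → z b ≠ j' → entN γ u b = 0 := by
    intro b h1 h2
    have hne : ¬ (((z u).val+1)%k = (z b).val ∨ ((z b).val+1)%k = (z u).val) := by
      rw [hzu]
      intro hcond
      rcases (hadj (z b)).mp hcond with h | h
      · exact h1 h
      · exact h2 h
    have hc0 : colorSeqN z γ (z u) (z b) = 0 := by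
      have h3 := hcol (z u) (z b)
      rw [if_neg hne] at h3
      exact h3
    by_cases hub : u = b
    · rw [← hub]; exact entN_self γ u
    · exact Nat.le_zero.mp (hc0 ▸ entN_le_colorSeqN z γ u b hub)
  -- Step 3: the color count for class (z u, j) is 2
  have hc2 : colorSeqN z γ (z u) j = 2 := by
    have h3 := hcol (z u) j
    rw [if_pos (by rw [hzu]; exact hadjj)] at h3
    exact h3
  -- Step 5: decompose via the double sum
  have hdd : colorSeqN z γ (z u) j
      = ∑ a, if z a = z u then (∑ b, if z b = j then entN γ a b else 0) else 0 := by
    rw [colorSeqN_double z γ (z u) j hzuj]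
    apply Finset.sum_congr rfl
    intro a _
    by_cases h : z a = z u
    · rw [if_pos h]
      apply Finset.sum_congr rfl
      intro b _
      by_cases h2 : z b = j
      · rw [if_pos ⟨h, h2⟩, if_pos h2]
      · rw [if_neg (fun hh => h2 hh.2), if_neg h2]
    · rw [if_neg h]
      apply Finset.sum_eq_zero
      intro b _
      exact if_neg (fun hh => h hh.1)
  have huU' : u ≠ U' := by
    intro h
    have h2 : u.val = U'.val := by rw [h]
    omega
  have hzUu : z U' = z u := by
    rw [Fin.ext_iff, hz, hz, hU'v]
    rw [Nat.add_mod_right]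
  have houter : (∑ a, if z a = z u then (∑ b, if z b = j then entN γ a b else 0) else 0)
      = (∑ b, if z b = j then entN γ u b else 0)
        + (∑ b, if z b = j then entN γ U' b else 0) := by
    rw [← Finset.sum_subset (Finset.subset_univ ({u, U'} : Finset (Fin (2*k))))
      (fun a _ ha => ?_)]
    · rw [Finset.sum_pair huU', if_pos rfl, if_pos hzUu]
    · rw [if_neg]
      intro h
      have h2 := (hmem a (z u)).mp h
      rw [hzu] at h2
      simp only [Finset.mem_insert, Finset.mem_singleton] at ha
      push_neg at ha
      rcases h2 with h2 | h2
      · exact ha.1 (Fin.ext h2)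
      · exact ha.2 (Fin.ext (by rw [hU'v]; omega))
  -- Step 6: sum at U' over class j is 1
  have hzv : z v = j := Fin.ext (by rw [hz]; exact hvj)
  have hTU' : (∑ b, if z b = j then entN γ U' b else 0) = 1 := by
    rw [Finset.sum_eq_single v]
    · rw [if_pos hzv]; exact huv
    · intro b _ hb
      by_cases h2 : z b = j
      · rw [if_pos h2]; exact hzero1 b hb
      · rw [if_neg h2]
    · intro h; exact absurd (mem_univ v) h
  have hTu : (∑ b, if z b = j then entN γ u b else 0) = 1 := by
    have h3 := hc2
    rw [hdd, houter, hTU'] at h3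
    omega
  -- Step 8: degree at u
  have hdu : ∑ t, entN γ u t = 3 := by
    have h3 := hdeg u
    rw [if_pos hu] at h3
    exact h3
  have hsplit : ∑ t, entN γ u t
      = (∑ b, if z b = j then entN γ u b else 0)
        + (∑ b, if z b = j' then entN γ u b else 0) := by
    rw [← Finset.sum_add_distrib]
    apply Finset.sum_congr rfl
    intro b _
    by_cases h1 : z b = j <;> by_cases h2 : z b = j'
    · exact absurd (h1.symm.trans h2) hjj'
    · rw [if_pos h1, if_neg h2, add_zero]
    · rw [if_neg h1, if_pos h2, zero_add]
    · rw [if_neg h1, if_neg h2, add_zero]; exact hclass0 b h1 h2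
  have hT'2 : (∑ b, if z b = j' then entN γ u b else 0) = 2 := by omega
  -- Step 9
  set w₁ : Fin (2*k) := ⟨j'.val, by omega⟩ with hw₁
  set w₂ : Fin (2*k) := ⟨j'.val + k, by omega⟩ with hw₂
  have hw₁v : w₁.val = j'.val := by rw [hw₁]
  have hw₂v : w₂.val = j'.val + k := by rw [hw₂]
  have hw₁w₂ : w₁ ≠ w₂ := by
    intro h
    have h2 : w₁.val = w₂.val := by rw [h]
    omega
  have hzw₁ : z w₁ = j' := Fin.ext (by rw [hz, hw₁v]; exact Nat.mod_eq_of_lt hj'lt)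
  have hzw₂ : z w₂ = j' := Fin.ext (by
    rw [hz, hw₂v, Nat.add_mod_right]
    exact Nat.mod_eq_of_lt hj'lt)
  have hpair : (∑ b, if z b = j' then entN γ u b else 0) = entN γ u w₁ + entN γ u w₂ := by
    rw [← Finset.sum_subset (Finset.subset_univ ({w₁, w₂} : Finset (Fin (2*k))))
      (fun b _ hb => ?_)]
    · rw [Finset.sum_pair hw₁w₂, if_pos hzw₁, if_pos hzw₂]
    · rw [if_neg]
      intro h
      have h2 := (hmem b j').mp h
      simp only [Finset.mem_insert, Finset.mem_singleton] at hb
      push_neg at hb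
      rcases h2 with h2 | h2
      · exact hb.1 (Fin.ext (by rw [hw₁v]; omega))
      · exact hb.2 (Fin.ext (by rw [hw₂v]; omega))
  have he1 : entN γ u w₁ = 1 := by
    have g1 := hle1 u w₁; have g2 := hle1 u w₂; omega
  have he2 : entN γ u w₂ = 1 := by
    have g1 := hle1 u w₁; have g2 := hle1 u w₂; omega
  -- Step 10
  intro w hw
  have hwv := mod2 k w.val hk0 w.isLt
  have hww : w = w₁ ∨ w = w₂ := by
    rcases hwv.2 with h | h
    · left; exact Fin.ext (by rw [hw₁v]; omega)
    · right; exact Fin.ext (by rw [hw₂v]; omega)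
  rcases hww with rfl | rfl
  · exact he1
  · exact he2

/-- Claim 1. For every `γ` in the simple fiber: if `u ∈ {1,…,k}`,
`v ∈ {1,…,2k}`, `ε ∈ {1,−1}` satisfy `v ≡ u + ε (mod k)` and `γ_{(u+k)v} = 1`, then
`γ_{uw} = 1` for every `w` with `w ≡ u − ε (mod k)`. -/
theorem claim_one (k : ℕ) (hk : 3 ≤ k) (γ : Edge (2 * k) → ℕ)
    (hγ : γ ∈ SimpleFiber
      (fun u : Fin (2 * k) => (⟨u.val % k, Nat.mod_lt _ (by omega)⟩ : Fin k))
      (fun u : Fin (2 * k) => if u.val < k then 3 else 1)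
      (fun i j : Fin k =>
        if (i.val + 1) % k = j.val ∨ (j.val + 1) % k = i.val then 2 else 0))
    (u : Fin (2 * k)) (hu : u.val < k) (v : Fin (2 * k)) (ε : ℤ)
    (hε : ε = 1 ∨ ε = -1)
    (hv : Int.ModEq (k : ℤ) (v.val : ℤ) ((u.val : ℤ) + ε))
    (huv : entN γ ⟨u.val + k, by omega⟩ v = 1) :
    ∀ w : Fin (2 * k), Int.ModEq (k : ℤ) (w.val : ℤ) ((u.val : ℤ) - ε) →
      entN γ u w = 1 := by
  obtain ⟨⟨hdegZ, hcolZ⟩, hsim⟩ := hγ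
  have hk0 : 0 < k := by omega
  have hdeg : ∀ a : Fin (2*k), degSeqN γ a = if a.val < k then 3 else 1 := by
    intro a
    have h := hdegZ a
    simp only [] at h
    by_cases hc : a.val < k
    · rw [if_pos hc] at h ⊢; exact_mod_cast h
    · rw [if_neg hc] at h ⊢; exact_mod_cast h
  have hcol : ∀ i j : Fin k,
      colorSeqN (fun u : Fin (2 * k) => (⟨u.val % k, Nat.mod_lt _ (by omega)⟩ : Fin k)) γ i j
      = if (i.val + 1) % k = j.val ∨ (j.val + 1) % k = i.val then 2 else 0 := by
    intro i j
    have h := hcolZ i j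
    simp only [] at h
    by_cases hc : (i.val + 1) % k = j.val ∨ (j.val + 1) % k = i.val
    · rw [if_pos hc] at h ⊢; exact_mod_cast h
    · rw [if_neg hc] at h ⊢; exact_mod_cast h
  intro w hw
  rcases hε with rfl | rfl
  · -- ε = 1
    have hA := mod2 k (u.val+1) hk0 (by omega)
    have hB := mod2 k (u.val+k-1) hk0 (by omega)
    refine aux_main k hk _ (fun a => rfl) γ hdeg hcol hsim u v hu
      ⟨(u.val+1)%k, Nat.mod_lt _ hk0⟩ ⟨(u.val+k-1)%k, Nat.mod_lt _ hk0⟩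
      (by simp only [ne_eq, Fin.mk.injEq]; omega)
      (fun c => by
        have hC := mod2 k (c.val+1) hk0 (by have := c.isLt; omega)
        have hc := c.isLt
        simp only [Fin.ext_iff]
        omega)
      (modeq_up k v.val u.val hv) huv w ?_
    exact modeq_down k w.val u.val hk0 hw
  · -- ε = -1
    have hA := mod2 k (u.val+1) hk0 (by omega)
    have hB := mod2 k (u.val+k-1) hk0 (by omega)
    have hv' : Int.ModEq (k:ℤ) (v.val:ℤ) ((u.val:ℤ) - 1) := by
      rw [sub_eq_add_neg]; exact hv
    have hw' : Int.ModEq (k:ℤ) (w.val:ℤ) ((u.val:ℤ) + 1) := by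
      have h2 : (u.val:ℤ) - (-1) = (u.val:ℤ) + 1 := by ring
      rw [h2] at hw; exact hw
    refine aux_main k hk _ (fun a => rfl) γ hdeg hcol hsim u v hu
      ⟨(u.val+k-1)%k, Nat.mod_lt _ hk0⟩ ⟨(u.val+1)%k, Nat.mod_lt _ hk0⟩
      (by simp only [ne_eq, Fin.mk.injEq]; omega)
      (fun c => by
        have hC := mod2 k (c.val+1) hk0 (by have := c.isLt; omega)
        have hc := c.isLt
        simp only [Fin.ext_iff]
        omega)
      (modeq_down k v.val u.val hk0 hv') huv w ?_
    exact modeq_up k w.val u.val hw'
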